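/- Let X be positive definite and B symmetric positive semidefinite n×n real matrices, K̂ an n×n matrix such that S := I - X^{1/2} K̂ X^{1/2} is symmetric. Let λ ≠ α be an eigenvalue of the block matrix [[I - X K̂, -X], [B, α I]]. Then there exists a unit vector z ∈ ℝⁿ such that, setting μ_K = zᵀ S z and μ_φ = zᵀ X^{1/2} B X^{1/2} z, the equation μ_K - μ_φ/(λ - α) - λ = 0 holds. -/

import Mathlib

open Matrix

namespace Matrix.PosSemidef

open scoped ComplexOrder

/-- The square root of a positive semidefinite matrix, as `Matrix.PosSemidef.sqrt` was defined
in Mathlib of December 2024 (since removed in favour of `CFC.sqrt`). -/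
noncomputable def sqrt {n 𝕜 : Type*} [Fintype n] [DecidableEq n] [RCLike 𝕜] {A : Matrix n n 𝕜}
    (hA : A.PosSemidef) : Matrix n n 𝕜 :=
  (hA.1.eigenvectorUnitary : Matrix n n 𝕜) * diagonal ((↑) ∘ (√·) ∘ hA.1.eigenvalues) *
    (star hA.1.eigenvectorUnitary : Matrix n n 𝕜)


lemma sqrt_mul_self {n 𝕜 : Type*} [Fintype n] [DecidableEq n] [RCLike 𝕜] {A : Matrix n n 𝕜}
    (hA : A.PosSemidef) : hA.sqrt * hA.sqrt = A := by
  have hU : star (hA.1.eigenvectorUnitary : Matrix n n 𝕜) * hA.1.eigenvectorUnitary = 1 :=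
    Unitary.star_mul_self_of_mem hA.1.eigenvectorUnitary.2
  have hD : diagonal (((↑) ∘ (√·) ∘ hA.1.eigenvalues : n → 𝕜)) *
      diagonal ((↑) ∘ (√·) ∘ hA.1.eigenvalues) = diagonal (RCLike.ofReal ∘ hA.1.eigenvalues) := by
    rw [diagonal_mul_diagonal]
    congr 1
    funext i
    simp only [Function.comp_apply]
    rw [← RCLike.ofReal_mul, Real.mul_self_sqrt (hA.eigenvalues_nonneg i)]
  conv_rhs => rw [hA.1.spectral_theorem]
  simp only [sqrt, Unitary.conjStarAlgAut_apply]
  calc _ = (hA.1.eigenvectorUnitary : Matrix n n 𝕜) * diagonal ((↑) ∘ (√·) ∘ hA.1.eigenvalues) *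
      (star (hA.1.eigenvectorUnitary : Matrix n n 𝕜) * (hA.1.eigenvectorUnitary : Matrix n n 𝕜)) *
      diagonal ((↑) ∘ (√·) ∘ hA.1.eigenvalues) * star (hA.1.eigenvectorUnitary : Matrix n n 𝕜) := by
        simp only [Matrix.mul_assoc]
    _ = _ := by rw [hU, Matrix.mul_one, Matrix.mul_assoc _ (diagonal _) (diagonal _), hD]

lemma sqrt_isHermitian {n 𝕜 : Type*} [Fintype n] [DecidableEq n] [RCLike 𝕜] {A : Matrix n n 𝕜}
    (hA : A.PosSemidef) : hA.sqrt.IsHermitian := by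
  unfold sqrt
  rw [star_eq_conjTranspose]
  refine isHermitian_mul_mul_conjTranspose _ (isHermitian_diagonal_of_self_adjoint _ ?_)
  funext i
  simp [RCLike.conj_ofReal]

end Matrix.PosSemidef

/-- Quadratic form of a Hermitian matrix is self-conjugate. -/
lemma herm_form_real {n : ℕ} {A : Matrix (Fin n) (Fin n) ℂ} (hA : A.IsHermitian)
    (z : Fin n → ℂ) : ((star z ⬝ᵥ A.mulVec z).re : ℂ) = star z ⬝ᵥ A.mulVec z := by
  rw [← Complex.conj_eq_iff_re]
  calc (starRingEnd ℂ) (star z ⬝ᵥ A *ᵥ z) = star (star z ⬝ᵥ A *ᵥ z) := rfl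
    _ = star (A *ᵥ z) ⬝ᵥ z := (star_dotProduct _ _).symm
    _ = (star z ᵥ* Aᴴ) ⬝ᵥ z := by rw [star_mulVec]
    _ = star z ⬝ᵥ (Aᴴ *ᵥ z) := by rw [← dotProduct_mulVec]
    _ = star z ⬝ᵥ A *ᵥ z := by rw [hA.eq]

/-- Reduction of the block eigenvalue problem to a scalar Rayleigh-quotient
equation: if `λ ≠ α` is an eigenvalue of `[[I - X K̂, -X], [B, α I]]` and
`S = I - X^{1/2} K̂ X^{1/2}` is symmetric, then there is a unit vector `z`
with `μ_K - μ_φ/(λ-α) - λ = 0` for the (real) quadratic forms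
`μ_K = z* S z`, `μ_φ = z* X^{1/2} B X^{1/2} z`. -/
theorem stmt_6 {n : ℕ} (X K B : Matrix (Fin n) (Fin n) ℝ) (α : ℝ) (lam : ℂ)
    (hX : X.PosDef) (hB : B.PosSemidef)
    (hS : (1 - hX.posSemidef.sqrt * K * hX.posSemidef.sqrt).IsHermitian)
    (hlam : ∃ y : (Fin n ⊕ Fin n) → ℂ, y ≠ 0 ∧
      ((fromBlocks (1 - X * K) (-X) B (α • 1)).map (Complex.ofReal ·)).mulVec y
        = lam • y)
    (hne : lam ≠ (α : ℂ)) :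
    ∃ z : Fin n → ℂ, star z ⬝ᵥ z = 1 ∧ ∃ μK μφ : ℝ,
      (μK : ℂ) = star z ⬝ᵥ
        ((1 - hX.posSemidef.sqrt * K * hX.posSemidef.sqrt).map (Complex.ofReal ·)).mulVec z ∧
      (μφ : ℂ) = star z ⬝ᵥ
        ((hX.posSemidef.sqrt * B * hX.posSemidef.sqrt).map (Complex.ofReal ·)).mulVec z ∧
      (μK : ℂ) - μφ / (lam - α) - lam = 0 := by
  classical
  obtain ⟨y, hy0, hyeig⟩ := hlam
  set R : Matrix (Fin n) (Fin n) ℝ := hX.posSemidef.sqrt with hRdef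
  have hRR : R * R = X := hX.posSemidef.sqrt_mul_self
  set φ : Matrix (Fin n) (Fin n) ℝ →+* Matrix (Fin n) (Fin n) ℂ :=
    (Complex.ofRealHom).mapMatrix with hφ
  have hφapp : ∀ M : Matrix (Fin n) (Fin n) ℝ, φ M = M.map (Complex.ofReal ·) :=
    fun M => rfl
  -- extract components of the eigenvector
  set u : Fin n → ℂ := y ∘ Sum.inl with hu
  set v : Fin n → ℂ := y ∘ Sum.inr with hv
  have hy' : y = Sum.elim u v := by funext i; cases i <;> rfl
  have hblocks : ((fromBlocks (1 - X * K) (-X) B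
        (α • (1 : Matrix (Fin n) (Fin n) ℝ))).map (Complex.ofReal ·))
      = fromBlocks (φ (1 - X*K)) (φ (-X)) (φ B) (φ (α • 1)) := by
    rw [fromBlocks_map]; rfl
  rw [hblocks, hy', fromBlocks_mulVec] at hyeig
  have heq1 : φ (1 - X*K) *ᵥ u + φ (-X) *ᵥ v = lam • u := by
    funext i
    have h := congrFun hyeig (Sum.inl i)
    simpa using h
  have heq2 : φ B *ᵥ u + φ (α • 1) *ᵥ v = lam • v := by
    funext i
    have h := congrFun hyeig (Sum.inr i)
    simpa using h
  have hα1 : φ (α • (1 : Matrix (Fin n) (Fin n) ℝ))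
      = (α : ℂ) • (1 : Matrix (Fin n) (Fin n) ℂ) := by
    rw [hφapp]
    ext i j
    by_cases h : i = j <;>
      simp [Matrix.map_apply, Matrix.one_apply, h]
  have heq2' : (lam - (α:ℂ)) • v = φ B *ᵥ u := by
    have h0 : φ B *ᵥ u + (α:ℂ) • v = lam • v := by
      rw [← heq2, hα1, smul_mulVec, one_mulVec]
    funext i
    have h := congrFun h0 i
    simp only [Pi.add_apply, Pi.smul_apply, smul_eq_mul] at h ⊢
    linear_combination -h
  have hne' : lam - (α:ℂ) ≠ 0 := sub_ne_zero.mpr hne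
  set c : ℂ := (lam - (α:ℂ))⁻¹ with hc
  have hvu : v = c • (φ B *ᵥ u) := by
    rw [← heq2', hc, smul_smul, inv_mul_cancel₀ hne', one_smul]
  -- u ≠ 0
  have hu0 : u ≠ 0 := by
    intro h
    have hv0 : v ≠ 0 := by
      intro h'
      apply hy0
      rw [hy', h, h']
      funext i; cases i <;> rfl
    obtain ⟨i, hi⟩ := Function.ne_iff.mp hv0
    have h2 : (lam - ↑α) * v i = 0 := by
      have h3 := congrFun heq2' i
      rw [h] at h3
      simpa using h3
    rcases mul_eq_zero.mp h2 with h3 | h3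
    · exact hne' h3
    · exact hi h3
  -- master equation for u
  have heqU : φ (1 - X*K) *ᵥ u - c • (φ (X*B) *ᵥ u) = lam • u := by
    rw [← heq1, hvu]
    have h4 : φ (-X) *ᵥ (c • (φ B *ᵥ u)) = - (c • (φ (X*B) *ᵥ u)) := by
      rw [map_neg, neg_mulVec, mulVec_smul, mulVec_mulVec, _root_.map_mul]
    rw [h4]
    abel
  -- invertibility of R over ℂ
  have hdetR : IsUnit (φ R).det := by
    have hdR : R.det ≠ 0 := by
      intro h
      have h5 : R.det * R.det = X.det := by rw [← det_mul, hRR]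
      rw [h, mul_zero] at h5
      exact hX.det_pos.ne' h5.symm
    refine isUnit_iff_ne_zero.mpr ?_
    have h6 : (φ R).det = (Complex.ofRealHom) R.det := (RingHom.map_det _ _).symm
    rw [h6]
    simpa using hdR
  have hinj : Function.Injective ((φ R).mulVec) := by
    intro a b h
    have h' := congrArg ((φ R)⁻¹ *ᵥ ·) h
    simpa [mulVec_mulVec, Matrix.nonsing_inv_mul _ hdetR, one_mulVec] using h'
  obtain ⟨w, hRw⟩ : ∃ w, φ R *ᵥ w = u :=
    ⟨(φ R)⁻¹ *ᵥ u, by rw [mulVec_mulVec, Matrix.mul_nonsing_inv _ hdetR, one_mulVec]⟩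
  have hw0 : w ≠ 0 := by
    intro h
    apply hu0
    rw [← hRw, h, mulVec_zero]
  -- similarity identities
  have hid1 : (1 - X*K) * R = R * (1 - R*K*R) := by
    rw [← hRR]; noncomm_ring
  have hid2 : (X*B) * R = R * (R*B*R) := by
    rw [← hRR]; noncomm_ring
  -- eigen equation for w
  have heqW : φ (1 - R*K*R) *ᵥ w - c • (φ (R*B*R) *ᵥ w) = lam • w := by
    apply hinj
    have lhs : φ R *ᵥ (φ (1 - R*K*R) *ᵥ w - c • (φ (R*B*R) *ᵥ w))
        = φ (1 - X*K) *ᵥ u - c • (φ (X*B) *ᵥ u) := by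
      rw [mulVec_sub, mulVec_smul, mulVec_mulVec, mulVec_mulVec,
        ← _root_.map_mul, ← _root_.map_mul, ← hid1, ← hid2,
        _root_.map_mul, _root_.map_mul, ← mulVec_mulVec, ← mulVec_mulVec, hRw]
    rw [lhs, heqU, ← hRw, mulVec_smul]
  -- normalization
  set s : ℝ := ∑ i, Complex.normSq (w i) with hs
  have hcs : star w ⬝ᵥ w = (s : ℂ) := by
    simp only [dotProduct, hs, Pi.star_apply, Complex.star_def]
    push_cast
    refine Finset.sum_congr rfl fun i _ => ?_
    rw [Complex.normSq_eq_conj_mul_self]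
  have hspos : 0 < s := by
    rcases (lt_or_eq_of_le (Finset.sum_nonneg fun i _ => Complex.normSq_nonneg (w i))) with h | h
    · exact h
    · exfalso
      apply hw0
      funext i
      have h7 := (Finset.sum_eq_zero_iff_of_nonneg
        (fun i _ => Complex.normSq_nonneg (w i))).mp h.symm i (Finset.mem_univ i)
      simpa using Complex.normSq_eq_zero.mp h7
  set t : ℝ := (Real.sqrt s)⁻¹ with ht
  have htt : t * t * s = 1 := by
    rw [ht, ← mul_inv, Real.mul_self_sqrt hspos.le, inv_mul_cancel₀ hspos.ne']
  have ht2 : (t:ℂ) * (t:ℂ) * (s:ℂ) = 1 := by exact_mod_cast htt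
  set z : Fin n → ℂ := (t : ℂ) • w with hz
  have hstz : star z = (t : ℂ) • star w := by
    rw [hz, star_smul]
    congr 1
    simp [Complex.star_def, Complex.conj_ofReal]
  have hz1 : star z ⬝ᵥ z = 1 := by
    rw [hstz, hz, smul_dotProduct, dotProduct_smul, hcs, smul_eq_mul, smul_eq_mul]
    linear_combination ht2
  -- the two quadratic forms, scaled
  have hzS : star z ⬝ᵥ (φ (1 - R*K*R) *ᵥ z)
      = (t:ℂ) * (t:ℂ) * (star w ⬝ᵥ (φ (1 - R*K*R) *ᵥ w)) := by
    rw [hz, hstz, mulVec_smul, smul_dotProduct, dotProduct_smul, smul_eq_mul, smul_eq_mul]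
    ring
  have hzT : star z ⬝ᵥ (φ (R*B*R) *ᵥ z)
      = (t:ℂ) * (t:ℂ) * (star w ⬝ᵥ (φ (R*B*R) *ᵥ w)) := by
    rw [hz, hstz, mulVec_smul, smul_dotProduct, dotProduct_smul, smul_eq_mul, smul_eq_mul]
    ring
  have hkeyW : star w ⬝ᵥ (φ (1 - R*K*R) *ᵥ w) - c * (star w ⬝ᵥ (φ (R*B*R) *ᵥ w))
      = lam * (s:ℂ) := by
    have h := congrArg (fun x => star w ⬝ᵥ x) heqW
    simp only [dotProduct_sub, dotProduct_smul, smul_eq_mul] at h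
    rw [h, hcs]
  have key : star z ⬝ᵥ (φ (1 - R*K*R) *ᵥ z) - c * (star z ⬝ᵥ (φ (R*B*R) *ᵥ z)) = lam := by
    rw [hzS, hzT]
    linear_combination (t:ℂ) * (t:ℂ) * hkeyW + lam * ht2
  -- Hermitian properties
  have hsemi : Function.Semiconj (Complex.ofReal ·) star star := by
    intro a
    simp [Complex.star_def, Complex.conj_ofReal]
  have hSH : (φ (1 - R*K*R)).IsHermitian := by
    rw [hφapp]
    exact hS.map _ hsemi
  have hTH : (φ (R*B*R)).IsHermitian := by
    rw [hφapp]
    refine IsHermitian.map ?_ _ hsemi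
    have hRH : R.IsHermitian := hX.posSemidef.sqrt_isHermitian
    have hBH : B.IsHermitian := hB.isHermitian
    show (R*B*R)ᴴ = R*B*R
    rw [conjTranspose_mul, conjTranspose_mul, hRH.eq, hBH.eq, mul_assoc]
  refine ⟨z, hz1, (star z ⬝ᵥ (φ (1 - R*K*R) *ᵥ z)).re,
    (star z ⬝ᵥ (φ (R*B*R) *ᵥ z)).re, ?_, ?_, ?_⟩
  · exact herm_form_real hSH z
  · exact herm_form_real hTH z
  · rw [herm_form_real hSH z, herm_form_real hTH z, div_eq_mul_inv, ← hc]
    linear_combination key
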